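/- arXiv:2506.10263 — 2 statements merged into one kernel-verified Lean document; each statement's English description precedes it below -/
import Mathlib

section
/- Fix k > 0, δ > 0, N ∈ ℕ, complex coefficients b₀, …, b_N and R_N ≥ 0. Let b : [−δ, δ] → ℂ be measurable with |b(t) − Σ_{j=0}^N b_j t^{2j}| ≤ R_N |t|^{2N+2} for all |t| ≤ δ. Then there exists a constant C > 0, depending only on k, δ, N, R_N and |b₀|, …, |b_N|, such that for every z ∈ ℂ with Re z ≥ 0, Im z ≥ 0 and |z| ≥ 1: |∫_{−δ}^{δ} e^{−k t² z e^{−iπ/4}} b(t) dt − Σ_{j=0}^N b_j Γ(j+1/2) (k z e^{−iπ/4})^{−(j+1/2)}| ≤ C |z|^{−(N + 3/2)}. -/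
open MeasureTheory Set Real Filter

noncomputable section


lemma norm_aux (w : ℂ) (n : ℕ) (t : ℝ) :
    ‖(t : ℂ) ^ n * Complex.exp (-w * (t : ℂ) ^ 2)‖ = |t| ^ n * rexp (-w.re * t ^ 2) := by
  rw [norm_mul, norm_pow, Complex.norm_real, Real.norm_eq_abs, norm_cexp_neg_mul_sq]

lemma integrable_abs_pow_mul_exp_neg_mul_sq {b : ℝ} (hb : 0 < b) (n : ℕ) :
    Integrable fun x : ℝ => |x| ^ n * rexp (-b * x ^ 2) := by
  have h : IntegrableOn (fun x : ℝ => |x| ^ n * rexp (-b * x ^ 2)) (Ioi 0) := by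
    refine (integrableOn_rpow_mul_exp_neg_mul_sq hb
      (s := (n : ℝ)) (by exact_mod_cast lt_of_lt_of_le neg_one_lt_zero (Nat.cast_nonneg n))).congr_fun (fun x hx => ?_) measurableSet_Ioi
    dsimp only; rw [Real.rpow_natCast, abs_of_pos hx]
  rw [← integrableOn_univ, ← Iio_union_Ici (a := (0:ℝ)), integrableOn_union,
    integrableOn_Ici_iff_integrableOn_Ioi]
  refine ⟨?_, h⟩
  rw [← (Measure.measurePreserving_neg (volume : Measure ℝ)).integrableOn_comp_preimage
      (Homeomorph.neg ℝ).measurableEmbedding]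
  simpa [Function.comp_def, abs_neg, neg_sq] using h

lemma integrable_cpow_mom {w : ℂ} (hw : 0 < w.re) (n : ℕ) :
    Integrable fun t : ℝ => (t : ℂ) ^ n * Complex.exp (-w * (t : ℂ) ^ 2) := by
  refine ⟨Continuous.aestronglyMeasurable ?_, ?_⟩
  · exact (Complex.continuous_ofReal.pow n).mul
      (Complex.continuous_exp.comp (continuous_const.mul (Complex.continuous_ofReal.pow 2)))
  · rw [← hasFiniteIntegral_norm_iff]
    simp_rw [norm_aux]
    exact (integrable_abs_pow_mul_exp_neg_mul_sq hw n).2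

lemma tendsto_aux {b : ℝ} (hb : 0 < b) (n : ℕ) :
    Tendsto (fun t : ℝ => |t| ^ n * rexp (-b * t ^ 2)) atTop (nhds 0) := by
  have h1 : Tendsto (fun x : ℝ => x ^ (n : ℝ) * rexp (-b * x ^ 2)) atTop (nhds 0) := by
    have h2 : Tendsto (fun x : ℝ => rexp (-(1/2) * x)) atTop (nhds 0) :=
      Real.tendsto_exp_atBot.comp
        (tendsto_id.const_mul_atTop_of_neg (by norm_num : -(1/2 : ℝ) < 0))
    exact (rpow_mul_exp_neg_mul_sq_isLittleO_exp_neg hb (n : ℝ)).tendsto_zero_of_tendsto h2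
  refine h1.congr' ?_
  filter_upwards [eventually_ge_atTop (0:ℝ)] with x hx
  rw [Real.rpow_natCast, abs_of_nonneg hx]



lemma scale_aux {c : ℝ} (hc : 0 < c) (n : ℕ) :
    (∫ t : ℝ, |t| ^ n * rexp (-c * t ^ 2))
      = c ^ (-((n : ℝ) + 1) / 2) * ∫ s : ℝ, |s| ^ n * rexp (-s ^ 2) := by
  have hs : 0 < Real.sqrt c := Real.sqrt_pos.mpr hc
  have key := MeasureTheory.Measure.integral_comp_mul_left
    (g := fun s : ℝ => |s| ^ n * rexp (-s ^ 2)) (Real.sqrt c)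
  have h2 : ∀ t : ℝ, |Real.sqrt c * t| ^ n * rexp (-(Real.sqrt c * t) ^ 2)
      = Real.sqrt c ^ n * (|t| ^ n * rexp (-c * t ^ 2)) := by
    intro t
    rw [abs_mul, abs_of_pos hs, mul_pow, mul_pow, Real.sq_sqrt hc.le]
    ring
  simp_rw [h2] at key
  rw [integral_const_mul, smul_eq_mul] at key
  have hpow : (Real.sqrt c ^ n)⁻¹ * |(Real.sqrt c)⁻¹| = c ^ (-((n : ℝ) + 1) / 2) := by
    rw [abs_of_pos (inv_pos.mpr hs), Real.sqrt_eq_rpow, ← Real.rpow_natCast (c ^ (1/2 : ℝ)) n,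
      ← Real.rpow_mul hc.le, ← Real.rpow_neg hc.le, ← Real.rpow_neg_one (c ^ (1/2 : ℝ)),
      ← Real.rpow_mul hc.le, ← Real.rpow_add hc]
    congr 1
    ring
  calc (∫ t : ℝ, |t| ^ n * rexp (-c * t ^ 2))
      = (Real.sqrt c ^ n)⁻¹ * (Real.sqrt c ^ n * ∫ t : ℝ, |t| ^ n * rexp (-c * t ^ 2)) := by
        rw [← mul_assoc, inv_mul_cancel₀ (pow_ne_zero n hs.ne'), one_mul]
    _ = (Real.sqrt c ^ n)⁻¹ * (|(Real.sqrt c)⁻¹| * ∫ s : ℝ, |s| ^ n * rexp (-s ^ 2)) := by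
        rw [key]
    _ = c ^ (-((n : ℝ) + 1) / 2) * ∫ s : ℝ, |s| ^ n * rexp (-s ^ 2) := by
        rw [← mul_assoc, hpow]

lemma exp_decay_aux {c : ℝ} (hc : 0 < c) (M : ℕ) {x : ℝ} (hx : 1 ≤ x) {s : ℝ}
    (hs0 : 0 ≤ s) (hsM : s ≤ M) :
    rexp (-(c * x)) ≤ (M.factorial * c⁻¹ ^ M) * x ^ (-s) := by
  have hx0 : (0:ℝ) < x := lt_of_lt_of_le one_pos hx
  have hcx : 0 < c * x := by positivity
  have h1 : (c * x) ^ M / M.factorial ≤ rexp (c * x) := by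
    refine le_trans ?_ (Real.sum_le_exp_of_nonneg hcx.le (M + 1))
    exact Finset.single_le_sum (f := fun i => (c * x) ^ i / (i.factorial : ℝ))
      (fun i _ => by positivity) (Finset.self_mem_range_succ M)
  have h2 : rexp (-(c * x)) ≤ (M.factorial : ℝ) / (c * x) ^ M := by
    rw [Real.exp_neg, ← one_div, div_le_div_iff₀ (Real.exp_pos _) (by positivity), one_mul]
    calc (c*x)^M = ((c*x)^M / M.factorial) * M.factorial := by field_simp
    _ ≤ rexp (c*x) * M.factorial := mul_le_mul_of_nonneg_right h1 (Nat.cast_nonneg _)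
    _ = (M.factorial : ℝ) * rexp (c*x) := mul_comm _ _
  have h3 : (M.factorial : ℝ) / (c * x) ^ M = (M.factorial * c⁻¹ ^ M) * (x ^ M)⁻¹ := by
    rw [mul_pow]
    field_simp
    rw [← mul_pow, mul_one_div_cancel hc.ne', one_pow]
  have h6 : x ^ (-(M:ℝ)) ≤ x ^ (-s) := Real.rpow_le_rpow_of_exponent_le hx (by linarith)
  refine h2.trans ?_
  rw [h3, ← Real.rpow_natCast x M, ← Real.rpow_neg hx0.le]
  exact mul_le_mul_of_nonneg_left h6 (by positivity)



lemma moment_aux {w : ℂ} (hw : 0 < w.re) (n : ℕ) :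
    Tendsto (fun t : ℝ => (t : ℂ) ^ n * Complex.exp (-w * (t : ℂ) ^ 2)) atTop (nhds 0) := by
  rw [tendsto_zero_iff_norm_tendsto_zero]
  simp_rw [norm_aux]
  exact tendsto_aux hw n

lemma moment_aux_bot {w : ℂ} (hw : 0 < w.re) (n : ℕ) :
    Tendsto (fun t : ℝ => (t : ℂ) ^ n * Complex.exp (-w * (t : ℂ) ^ 2)) atBot (nhds 0) := by
  rw [tendsto_zero_iff_norm_tendsto_zero]
  simp_rw [norm_aux]
  have h : Tendsto (fun t : ℝ => |(-t)| ^ n * rexp (-w.re * (-t) ^ 2)) atTop (nhds 0) := by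
    simpa [abs_neg, neg_sq] using tendsto_aux hw n
  have := h.comp tendsto_neg_atBot_atTop
  simpa [Function.comp_def] using this

lemma moment {w : ℂ} (hw : 0 < w.re) (j : ℕ) :
    ∫ t : ℝ, (t : ℂ) ^ (2 * j) * Complex.exp (-w * (t : ℂ) ^ 2)
      = Complex.Gamma ((j : ℂ) + 1 / 2) * w ^ (-((j : ℂ) + 1 / 2)) := by
  have hw0 : w ≠ 0 := fun h => by simp [h] at hw
  have harg : w.arg ≠ π := by
    intro h
    have := (Complex.arg_eq_pi_iff.mp h).1
    linarith
  induction j with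
  | zero =>
    simp only [Nat.cast_zero, zero_add, mul_zero, pow_zero, one_mul]
    rw [integral_gaussian_complex hw, Complex.Gamma_one_half_eq]
    have h1 : (↑π / w : ℂ) ^ (1/2 : ℂ) = (↑π : ℂ) ^ (1/2 : ℂ) * w ^ (-(1/2) : ℂ) := by
      rw [div_eq_mul_inv,
        Complex.cpow_def_of_ne_zero
          (mul_ne_zero (Complex.ofReal_ne_zero.mpr pi_ne_zero) (inv_ne_zero hw0)),
        Complex.cpow_def_of_ne_zero (Complex.ofReal_ne_zero.mpr pi_ne_zero),
        Complex.cpow_def_of_ne_zero hw0,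
        Complex.log_ofReal_mul pi_pos (inv_ne_zero hw0),
        Complex.log_inv _ harg, Complex.ofReal_log pi_pos.le, ← Complex.exp_add]
      congr 1
      ring
    have h2 : ((π : ℝ) : ℂ) ^ (1/2 : ℂ) = ((Real.sqrt π : ℝ) : ℂ) := by
      rw [Real.sqrt_eq_rpow, Complex.ofReal_cpow pi_pos.le]
      norm_num
    rw [h1, h2]
  | succ j ih =>
    set g : ℕ → ℝ → ℂ := fun n t => (t : ℂ) ^ n * Complex.exp (-w * (t : ℂ) ^ 2) with hg
    have hF : ∀ t : ℝ, HasDerivAt (fun t : ℝ => (t : ℂ) ^ (2*j+1) * Complex.exp (-w * (t : ℂ) ^ 2))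
        ((2*j+1 : ℂ) * g (2*j) t - (2*w) * g (2*j+2) t) t := by
      intro t
      have hpow : HasDerivAt (fun t : ℝ => (t : ℂ) ^ (2*j+1))
          (((2*j+1 : ℕ) : ℂ) * (t : ℂ) ^ (2*j)) t := by
        simpa using (hasDerivAt_pow (2*j+1) ((t : ℝ) : ℂ)).comp_ofReal
      have hexp : HasDerivAt (fun t : ℝ => Complex.exp (-w * (t : ℂ) ^ 2))
          (Complex.exp (-w * (t : ℂ) ^ 2) * (-w * (2 * (t : ℂ)))) t := by
        have := (((hasDerivAt_pow 2 ((t : ℝ) : ℂ)).const_mul (-w)).cexp).comp_ofReal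
        simpa using this
      have := hpow.mul hexp
      convert this using 1
      · rfl
      · rfl
      simp only [hg]
      push_cast
      ring
    have hint : Integrable (fun t : ℝ => (2*j+1 : ℂ) * g (2*j) t - (2*w) * g (2*j+2) t) :=
      ((integrable_cpow_mom hw (2*j)).const_mul _).sub ((integrable_cpow_mom hw (2*j+2)).const_mul _)
    have htop := moment_aux hw (2*j+1) (w := w)
    have hbot := moment_aux_bot hw (2*j+1) (w := w)
    have h₁ : ∫ t in Ioi (0:ℝ), ((2*j+1 : ℂ) * g (2*j) t - (2*w) * g (2*j+2) t)
        = 0 - ((0 : ℝ) : ℂ) ^ (2*j+1) * Complex.exp (-w * ((0:ℝ) : ℂ) ^ 2) :=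
      integral_Ioi_of_hasDerivAt_of_tendsto' (fun x _ => hF x) hint.integrableOn htop
    have h₂ : ∫ t in Iic (0:ℝ), ((2*j+1 : ℂ) * g (2*j) t - (2*w) * g (2*j+2) t)
        = ((0 : ℝ) : ℂ) ^ (2*j+1) * Complex.exp (-w * ((0:ℝ) : ℂ) ^ 2) - 0 :=
      integral_Iic_of_hasDerivAt_of_tendsto' (fun x _ => hF x) hint.integrableOn hbot
    have htotal : ∫ t : ℝ, ((2*j+1 : ℂ) * g (2*j) t - (2*w) * g (2*j+2) t) = 0 := by
      rw [← intervalIntegral.integral_Iic_add_Ioi hint.integrableOn hint.integrableOn, h₁, h₂]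
      simp
    rw [integral_sub ((integrable_cpow_mom hw (2*j)).const_mul _)
        ((integrable_cpow_mom hw (2*j+2)).const_mul _), integral_const_mul, integral_const_mul,
        sub_eq_zero] at htotal
    have hgoal : (2*w) * ∫ t : ℝ, (t : ℂ) ^ (2*(j+1)) * Complex.exp (-w * (t : ℂ) ^ 2)
        = (2*(j:ℂ)+1) * (Complex.Gamma ((j : ℂ) + 1 / 2) * w ^ (-((j : ℂ) + 1 / 2))) := by
      rw [show 2*(j+1) = 2*j+2 by ring, ← htotal, ih]
    -- now algebra
    have hGamma : Complex.Gamma (((j:ℕ)+1 : ℂ) + 1/2) = ((j : ℂ) + 1/2) * Complex.Gamma ((j : ℂ) + 1/2) := by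
      have h0 : ((j : ℂ) + 1/2) ≠ 0 := by
        intro h
        have := congrArg Complex.re h
        simp at this
        have : (0:ℝ) ≤ (j:ℝ) := Nat.cast_nonneg j
        linarith
      rw [show ((j:ℕ)+1 : ℂ) + 1/2 = ((j : ℂ) + 1/2) + 1 by push_cast; ring, Complex.Gamma_add_one _ h0]
    have hpow : w ^ (-(((j:ℕ)+1 : ℂ) + 1/2)) = w ^ (-((j : ℂ) + 1/2)) * w⁻¹ := by
      rw [show (-(((j:ℕ)+1 : ℂ) + 1/2)) = (-((j : ℂ) + 1/2)) + (-1) by push_cast; ring,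
        Complex.cpow_add _ _ hw0, Complex.cpow_neg_one]
    have h2w : (2*w) ≠ 0 := by simp [hw0]
    push_cast
    rw [hGamma, hpow]
    apply mul_left_cancel₀ h2w
    rw [hgoal]
    field_simp


set_option maxHeartbeats 1000000 in
/-- Local steepest-descent expansion: if `b` agrees with the even
polynomial `Σ_{j≤N} b_j t^{2j}` on `[-δ,δ]` up to an error `R|t|^{2N+2}`, then there is a
constant `C > 0` (depending only on `k, δ, N, R` and the `|b_j|`) such that for `z` in
the closed first quadrant with `|z| ≥ 1`,
`|∫_{-δ}^δ e^{-k t² z e^{-iπ/4}} b(t) dt − Σ_{j≤N} b_j Γ(j+1/2)(kze^{-iπ/4})^{-(j+1/2)}|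
 ≤ C |z|^{-(N+3/2)}`. -/
theorem statement_14 (k δ : ℝ) (hk : 0 < k) (hδ : 0 < δ) (N : ℕ)
    (bc : ℕ → ℂ) (R : ℝ) (hR : 0 ≤ R) :
    ∃ C > 0, ∀ b : ℝ → ℂ, Measurable b →
      (∀ t : ℝ, |t| ≤ δ →
        ‖(b t - ∑ j ∈ Finset.range (N + 1), bc j * (t : ℂ) ^ (2 * j))‖ ≤
          R * |t| ^ (2 * N + 2)) →
      ∀ z : ℂ, 0 ≤ z.re → 0 ≤ z.im → 1 ≤ ‖z‖ →
        ‖((∫ t in Set.Icc (-δ) δ,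
            Complex.exp (-k * t ^ 2 * z * Complex.exp (-(π / 4) * Complex.I)) * b t) -
          ∑ j ∈ Finset.range (N + 1), bc j * Complex.Gamma ((j : ℂ) + 1 / 2) *
            ((k : ℂ) * z * Complex.exp (-(π / 4) * Complex.I)) ^ (-((j : ℂ) + 1 / 2)))‖ ≤
          C * ‖z‖ ^ (-((N : ℝ) + 3 / 2)) := by
  have hs2 : (0:ℝ) < Real.sqrt 2 := by positivity
  set m : ℝ := k * (Real.sqrt 2 / 2) with hm_def
  have hm : 0 < m := by positivity
  set A : ℝ := ∫ s : ℝ, |s| ^ (2*N+2) * rexp (-s ^ 2) with hA_def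
  have hA0 : 0 ≤ A := integral_nonneg (fun s => by positivity)
  set B : ℕ → ℝ := fun j => ∫ t : ℝ, |t| ^ (2*j) * rexp (-(m/2) * t ^ 2) with hB_def
  have hB0 : ∀ j, 0 ≤ B j := fun j => integral_nonneg (fun t => by positivity)
  set c : ℝ := m * δ^2 / 2 with hc_def
  have hc : 0 < c := by positivity
  set K : ℝ := ((N+2).factorial : ℝ) * c⁻¹ ^ (N+2) with hK_def
  have hK0 : 0 ≤ K := by positivity
  have hC2 : 0 ≤ (∑ j ∈ Finset.range (N+1), ‖(bc j)‖ * B j) * K :=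
    mul_nonneg (Finset.sum_nonneg fun j _ =>
      mul_nonneg (norm_nonneg _) (hB0 j)) hK0
  have hC1 : 0 ≤ R * (m ^ (-((N:ℝ) + 3/2))) * A := by positivity
  refine ⟨R * (m ^ (-((N:ℝ) + 3/2))) * A
      + (∑ j ∈ Finset.range (N+1), ‖(bc j)‖ * B j) * K + 1, by linarith, ?_⟩
  intro b hb hbP z hzre hzim hz1
  set w : ℂ := (k : ℂ) * z * Complex.exp (-((π:ℂ) / 4) * Complex.I) with hw_def
  have hzpos : (0:ℝ) < ‖z‖ := lt_of_lt_of_le one_pos hz1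
  have he_re : (Complex.exp (-((π:ℂ)/4) * Complex.I)).re = Real.sqrt 2 / 2 := by
    rw [show -((π:ℂ)/4) * Complex.I = ((-(π/4) : ℝ) : ℂ) * Complex.I by push_cast; ring,
      Complex.exp_ofReal_mul_I_re, Real.cos_neg, Real.cos_pi_div_four]
  have he_im : (Complex.exp (-((π:ℂ)/4) * Complex.I)).im = -(Real.sqrt 2 / 2) := by
    rw [show -((π:ℂ)/4) * Complex.I = ((-(π/4) : ℝ) : ℂ) * Complex.I by push_cast; ring,
      Complex.exp_ofReal_mul_I_im, Real.sin_neg, Real.sin_pi_div_four]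
  have habs_le : ‖z‖ ≤ z.re + z.im := by
    rw [Complex.norm_def, Complex.normSq_apply]
    refine le_trans (Real.sqrt_le_sqrt (by nlinarith)) (le_of_eq (Real.sqrt_sq (by linarith)))
  have hwre : w.re = m * (z.re + z.im) := by
    rw [hw_def, Complex.mul_re, Complex.mul_re, he_re, he_im, Complex.ofReal_re,
      Complex.ofReal_im, Complex.mul_im]
    simp only [Complex.ofReal_re, Complex.ofReal_im]
    rw [hm_def]
    ring
  have hwge : m * ‖z‖ ≤ w.re := by
    rw [hwre]
    exact mul_le_mul_of_nonneg_left habs_le hm.le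
  have hw : 0 < w.re := lt_of_lt_of_le (by positivity) hwge
  -- rewrite integrand
  have harg : ∀ t : ℝ, -(k:ℂ) * (t:ℂ) ^ 2 * z * Complex.exp (-((π:ℂ)/4) * Complex.I)
      = -w * (t:ℂ)^2 := fun t => by rw [hw_def]; ring
  rw [MeasureTheory.setIntegral_congr_fun measurableSet_Icc
    (fun t _ => by rw [harg t] : EqOn _ (fun t : ℝ => Complex.exp (-w * (t:ℂ)^2) * b t) _)]
  set P : ℝ → ℂ := fun t : ℝ => ∑ j ∈ Finset.range (N+1), bc j * (t:ℂ) ^ (2*j) with hP_def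
  set M0 : ℝ := (∑ j ∈ Finset.range (N+1), ‖(bc j)‖ * δ ^ (2*j)) + R * δ ^ (2*N+2)
    with hM0_def
  have hbbound : ∀ t : ℝ, |t| ≤ δ → ‖(b t)‖ ≤ M0 := by
    intro t ht
    have h1 : ‖(P t)‖ ≤ ∑ j ∈ Finset.range (N+1), ‖(bc j)‖ * δ ^ (2*j) := by
      refine le_trans (norm_sum_le _ _) (Finset.sum_le_sum fun j _ => ?_)
      rw [norm_mul, norm_pow, Complex.norm_real, Real.norm_eq_abs]
      exact mul_le_mul_of_nonneg_left (pow_le_pow_left₀ (abs_nonneg t) ht _) (norm_nonneg _)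
    have h2 : ‖(b t - P t)‖ ≤ R * δ ^ (2*N+2) := by
      refine le_trans (hbP t ht) (mul_le_mul_of_nonneg_left (pow_le_pow_left₀ (abs_nonneg t) ht _) hR)
    calc ‖(b t)‖ = ‖((b t - P t) + P t)‖ := by ring_nf
      _ ≤ ‖(b t - P t)‖ + ‖(P t)‖ := norm_add_le _ _
      _ ≤ M0 := by rw [hM0_def]; linarith
  have hcont : Continuous fun t : ℝ => Complex.exp (-w * (t:ℂ)^2) :=
    Complex.continuous_exp.comp (continuous_const.mul (Complex.continuous_ofReal.pow 2))
  have hbintOn : IntegrableOn (fun t : ℝ => Complex.exp (-w*(t:ℂ)^2) * b t) (Icc (-δ) δ) := by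
    refine Measure.integrableOn_of_bounded (M := M0) measure_Icc_lt_top.ne
      ((hcont.measurable.mul hb).aestronglyMeasurable) ?_
    filter_upwards [ae_restrict_mem measurableSet_Icc] with t ht
    rw [norm_mul]
    have h1 : ‖Complex.exp (-w*(t:ℂ)^2)‖ ≤ 1 := by
      rw [norm_cexp_neg_mul_sq]
      exact Real.exp_le_one_iff.mpr (by nlinarith [sq_nonneg t])
    have h2 : ‖b t‖ ≤ M0 := by
      exact hbbound t (abs_le.mpr ⟨by linarith [ht.1], ht.2⟩)
    calc ‖Complex.exp (-w*(t:ℂ)^2)‖ * ‖b t‖ ≤ 1 * M0 :=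
          mul_le_mul h1 h2 (norm_nonneg _) zero_le_one
      _ = M0 := one_mul _
  have hgint : ∀ n : ℕ, Integrable fun t : ℝ => (t:ℂ)^n * Complex.exp (-w * (t:ℂ)^2) :=
    fun n => integrable_cpow_mom hw n
  have hgIcc : ∀ n : ℕ, IntegrableOn (fun t : ℝ => (t:ℂ)^n * Complex.exp (-w*(t:ℂ)^2))
      (Icc (-δ) δ) := fun n => (hgint n).integrableOn
  have hfP_eq : (fun t : ℝ => Complex.exp (-w*(t:ℂ)^2) * P t)
      = fun t : ℝ => ∑ j ∈ Finset.range (N+1), bc j * ((t:ℂ)^(2*j) * Complex.exp (-w*(t:ℂ)^2)) := by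
    funext t
    simp only [hP_def, Finset.mul_sum]
    exact Finset.sum_congr rfl fun j _ => by ring
  have hfPint : IntegrableOn (fun t : ℝ => Complex.exp (-w*(t:ℂ)^2) * P t) (Icc (-δ) δ) := by
    rw [hfP_eq]
    exact integrable_finset_sum _ (fun j _ => ((hgIcc (2*j)).const_mul _))
  have hdiffint : IntegrableOn (fun t : ℝ => Complex.exp (-w*(t:ℂ)^2) * (b t - P t)) (Icc (-δ) δ) := by
    have heq : (fun t : ℝ => Complex.exp (-w*(t:ℂ)^2) * (b t - P t))
        = fun t : ℝ => Complex.exp (-w*(t:ℂ)^2) * b t - Complex.exp (-w*(t:ℂ)^2) * P t :=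
      funext fun t => by ring
    rw [heq]
    exact hbintOn.sub hfPint
  have hsplit : (∫ t in Icc (-δ) δ, Complex.exp (-w*(t:ℂ)^2) * b t)
      = (∫ t in Icc (-δ) δ, Complex.exp (-w*(t:ℂ)^2) * (b t - P t))
        + ∑ j ∈ Finset.range (N+1), bc j *
          ∫ t in Icc (-δ) δ, (t:ℂ)^(2*j) * Complex.exp (-w*(t:ℂ)^2) := by
    have e1 : ∑ j ∈ Finset.range (N+1), bc j *
          ∫ t in Icc (-δ) δ, (t:ℂ)^(2*j) * Complex.exp (-w*(t:ℂ)^2)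
        = ∫ t in Icc (-δ) δ, Complex.exp (-w*(t:ℂ)^2) * P t := by
      rw [hfP_eq, integral_finset_sum _ (fun j _ => ((hgIcc (2*j)).const_mul _))]
      exact Finset.sum_congr rfl fun j _ => (integral_const_mul _ _).symm
    rw [e1, ← integral_add hdiffint hfPint]
    exact setIntegral_congr_fun measurableSet_Icc (fun t _ => by ring)
  have key : (∫ t in Icc (-δ) δ, Complex.exp (-w*(t:ℂ)^2) * b t)
      - ∑ j ∈ Finset.range (N+1), bc j * Complex.Gamma ((j:ℂ)+1/2) * w ^ (-((j:ℂ)+1/2))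
      = (∫ t in Icc (-δ) δ, Complex.exp (-w*(t:ℂ)^2) * (b t - P t))
        - ∑ j ∈ Finset.range (N+1), bc j *
          ∫ t in (Icc (-δ) δ)ᶜ, (t:ℂ)^(2*j) * Complex.exp (-w*(t:ℂ)^2) := by
    rw [hsplit]
    have e2 : ∀ j ∈ Finset.range (N+1), bc j * Complex.Gamma ((j:ℂ)+1/2) * w ^ (-((j:ℂ)+1/2))
        = bc j * (∫ t in Icc (-δ) δ, (t:ℂ)^(2*j) * Complex.exp (-w*(t:ℂ)^2))
          + bc j * (∫ t in (Icc (-δ) δ)ᶜ, (t:ℂ)^(2*j) * Complex.exp (-w*(t:ℂ)^2)) := by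
      intro j _
      rw [mul_assoc, ← moment hw j, ← integral_add_compl measurableSet_Icc (hgint (2*j)), mul_add]
    rw [Finset.sum_congr rfl e2, Finset.sum_add_distrib]
    ring
  rw [key]
  set T1 : ℂ := ∫ t in Icc (-δ) δ, Complex.exp (-w*(t:ℂ)^2) * (b t - P t) with hT1_def
  set T2 : ℂ := ∑ j ∈ Finset.range (N+1), bc j *
    ∫ t in (Icc (-δ) δ)ᶜ, (t:ℂ)^(2*j) * Complex.exp (-w*(t:ℂ)^2) with hT2_def
  have htri : ‖(T1 - T2)‖ ≤ ‖T1‖ + ‖T2‖ := by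
    simpa [sub_eq_add_neg] using norm_add_le T1 (-T2)
  refine le_trans htri ?_
  have hXnn : (0:ℝ) ≤ ‖z‖ ^ (-((N:ℝ) + 3/2)) := Real.rpow_nonneg (norm_nonneg _) _
  -- bound T1
  have hmz : 0 < m * ‖z‖ := by positivity
  have hT1bound : ‖T1‖
      ≤ R * (m ^ (-((N:ℝ)+3/2))) * A * ‖z‖ ^ (-((N:ℝ)+3/2)) := by
    have h1 : ‖T1‖ ≤ ∫ t in Icc (-δ) δ, ‖Complex.exp (-w*(t:ℂ)^2) * (b t - P t)‖ := by
      rw [hT1_def]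
      exact norm_integral_le_integral_norm _
    have hmaj : Integrable (fun t : ℝ => R * (|t| ^ (2*N+2) * rexp (-(m * ‖z‖) * t^2))) :=
      (integrable_abs_pow_mul_exp_neg_mul_sq hmz (2*N+2)).const_mul R
    have h2 : (∫ t in Icc (-δ) δ, ‖Complex.exp (-w*(t:ℂ)^2) * (b t - P t)‖)
        ≤ ∫ t in Icc (-δ) δ, R * (|t| ^ (2*N+2) * rexp (-(m * ‖z‖) * t^2)) := by
      refine setIntegral_mono_on hdiffint.norm hmaj.integrableOn measurableSet_Icc ?_
      intro t ht
      rw [norm_mul, norm_cexp_neg_mul_sq]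
      have hbt : ‖b t - P t‖ ≤ R * |t|^(2*N+2) := by
          exact hbP t (abs_le.mpr ⟨by linarith [ht.1], ht.2⟩)
      have hexp2 : rexp (-w.re * t^2) ≤ rexp (-(m * ‖z‖) * t^2) := by
        apply Real.exp_le_exp.mpr
        nlinarith [sq_nonneg t]
      calc rexp (-w.re * t^2) * ‖b t - P t‖
          ≤ rexp (-(m * ‖z‖) * t^2) * (R * |t|^(2*N+2)) :=
            mul_le_mul hexp2 hbt (norm_nonneg _) (Real.exp_pos _).le
        _ = R * (|t| ^ (2*N+2) * rexp (-(m * ‖z‖) * t^2)) := by ring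
    have h3 : (∫ t in Icc (-δ) δ, R * (|t| ^ (2*N+2) * rexp (-(m * ‖z‖) * t^2)))
        ≤ ∫ t : ℝ, R * (|t| ^ (2*N+2) * rexp (-(m * ‖z‖) * t^2)) :=
      setIntegral_le_integral hmaj (ae_of_all _ fun t => by positivity)
    have h4 : (∫ t : ℝ, R * (|t| ^ (2*N+2) * rexp (-(m * ‖z‖) * t^2)))
        = R * ((m * ‖z‖) ^ (-(((2*N+2 : ℕ) : ℝ) + 1) / 2) * A) := by
      rw [integral_const_mul, scale_aux hmz (2*N+2), hA_def]
    have h5 : ((m * ‖z‖) ^ (-(((2*N+2 : ℕ) : ℝ) + 1) / 2))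
        = m ^ (-((N:ℝ)+3/2)) * ‖z‖ ^ (-((N:ℝ)+3/2)) := by
      rw [show (-(((2*N+2 : ℕ) : ℝ) + 1) / 2) = -((N:ℝ)+3/2) by push_cast; ring]
      exact Real.mul_rpow hm.le (norm_nonneg _)
    calc ‖T1‖ ≤ _ := h1
      _ ≤ _ := h2
      _ ≤ _ := h3
      _ = R * (m ^ (-((N:ℝ)+3/2)) * ‖z‖ ^ (-((N:ℝ)+3/2)) * A) := by rw [h4, h5]
      _ = R * (m ^ (-((N:ℝ)+3/2))) * A * ‖z‖ ^ (-((N:ℝ)+3/2)) := by ring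
  -- bound T2
  have hT2bound : ‖T2‖
      ≤ (∑ j ∈ Finset.range (N+1), ‖(bc j)‖ * B j) * K
        * ‖z‖ ^ (-((N:ℝ)+3/2)) := by
    have hexpK : rexp (-(c * ‖z‖)) ≤ K * ‖z‖ ^ (-((N:ℝ)+3/2)) := by
      rw [hK_def]
      exact exp_decay_aux hc (N+2) hz1 (by positivity) (by push_cast; linarith)
    have hper : ∀ j ∈ Finset.range (N+1),
        ‖(bc j * ∫ t in (Icc (-δ) δ)ᶜ, (t:ℂ)^(2*j) * Complex.exp (-w*(t:ℂ)^2))‖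
        ≤ ‖(bc j)‖ * B j * (K * ‖z‖ ^ (-((N:ℝ)+3/2))) := by
      intro j _
      rw [norm_mul]
      have hmaj2 : Integrable (fun t : ℝ => rexp (-(c * ‖z‖))
          * (|t| ^ (2*j) * rexp (-(m/2) * t^2))) :=
        (integrable_abs_pow_mul_exp_neg_mul_sq (by positivity) (2*j)).const_mul _
      have hnorm1 : ‖(∫ t in (Icc (-δ) δ)ᶜ, (t:ℂ)^(2*j) * Complex.exp (-w*(t:ℂ)^2))‖
          ≤ ∫ t in (Icc (-δ) δ)ᶜ, ‖(t:ℂ)^(2*j) * Complex.exp (-w*(t:ℂ)^2)‖ := by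
        exact norm_integral_le_integral_norm _
      have hnorm2 : (∫ t in (Icc (-δ) δ)ᶜ, ‖(t:ℂ)^(2*j) * Complex.exp (-w*(t:ℂ)^2)‖)
          ≤ ∫ t in (Icc (-δ) δ)ᶜ, rexp (-(c * ‖z‖))
              * (|t| ^ (2*j) * rexp (-(m/2) * t^2)) := by
        refine setIntegral_mono_on ((hgint (2*j)).norm.integrableOn)
          hmaj2.integrableOn measurableSet_Icc.compl ?_
        intro t ht
        have hδt : δ ≤ |t| := by
          by_contra hlt
          push_neg at hlt
          exact ht (abs_le.mp hlt.le |> fun h => ⟨h.1, h.2⟩)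
        have hδsq : δ^2 ≤ t^2 := by
          rw [← sq_abs t]
          exact pow_le_pow_left₀ hδ.le hδt 2
        rw [norm_aux]
        have hexp3 : rexp (-w.re * t^2)
            ≤ rexp (-(c * ‖z‖)) * rexp (-(m/2) * t^2) := by
          rw [← Real.exp_add]
          apply Real.exp_le_exp.mpr
          have k1 : c * ‖z‖ ≤ (m * ‖z‖ / 2) * t^2 := by
            rw [hc_def]
            calc m * δ^2 / 2 * ‖z‖ = (m * ‖z‖ / 2) * δ^2 := by ring
              _ ≤ (m * ‖z‖ / 2) * t^2 :=
                mul_le_mul_of_nonneg_left hδsq (by positivity)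
          have k2 : (m * ‖z‖ / 2 + m/2) * t^2 ≤ w.re * t^2 := by
            have h3 : m * ‖z‖ / 2 + m/2 ≤ m * ‖z‖ := by nlinarith
            exact mul_le_mul_of_nonneg_right (h3.trans hwge) (sq_nonneg t)
          nlinarith [sq_nonneg t]
        calc |t| ^ (2*j) * rexp (-w.re * t^2)
            ≤ |t| ^ (2*j) * (rexp (-(c * ‖z‖)) * rexp (-(m/2) * t^2)) :=
              mul_le_mul_of_nonneg_left hexp3 (by positivity)
          _ = rexp (-(c * ‖z‖)) * (|t| ^ (2*j) * rexp (-(m/2) * t^2)) := by ring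
      have hnorm3 : (∫ t in (Icc (-δ) δ)ᶜ, rexp (-(c * ‖z‖))
            * (|t| ^ (2*j) * rexp (-(m/2) * t^2)))
          ≤ rexp (-(c * ‖z‖)) * B j := by
        rw [integral_const_mul, hB_def]
        exact mul_le_mul_of_nonneg_left
          (setIntegral_le_integral (integrable_abs_pow_mul_exp_neg_mul_sq (by positivity) (2*j))
            (ae_of_all _ fun t => by positivity)) (Real.exp_pos _).le
      have hIj : ‖(∫ t in (Icc (-δ) δ)ᶜ, (t:ℂ)^(2*j) * Complex.exp (-w*(t:ℂ)^2))‖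
          ≤ B j * (K * ‖z‖ ^ (-((N:ℝ)+3/2))) := by
        refine le_trans hnorm1 (le_trans hnorm2 (le_trans hnorm3 ?_))
        calc rexp (-(c * ‖z‖)) * B j
            ≤ (K * ‖z‖ ^ (-((N:ℝ)+3/2))) * B j :=
              mul_le_mul_of_nonneg_right hexpK (hB0 j)
          _ = B j * (K * ‖z‖ ^ (-((N:ℝ)+3/2))) := mul_comm _ _
      calc ‖(bc j)‖ * ‖(∫ t in (Icc (-δ) δ)ᶜ,
            (t:ℂ)^(2*j) * Complex.exp (-w*(t:ℂ)^2))‖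
          ≤ ‖(bc j)‖ * (B j * (K * ‖z‖ ^ (-((N:ℝ)+3/2)))) :=
            mul_le_mul_of_nonneg_left hIj (norm_nonneg _)
        _ = ‖(bc j)‖ * B j * (K * ‖z‖ ^ (-((N:ℝ)+3/2))) := by ring
    calc ‖T2‖ ≤ ∑ j ∈ Finset.range (N+1), ‖(bc j * ∫ t in (Icc (-δ) δ)ᶜ,
          (t:ℂ)^(2*j) * Complex.exp (-w*(t:ℂ)^2))‖ := by
          rw [hT2_def]; exact norm_sum_le _ _
      _ ≤ ∑ j ∈ Finset.range (N+1),
          ‖(bc j)‖ * B j * (K * ‖z‖ ^ (-((N:ℝ)+3/2))) :=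
          Finset.sum_le_sum hper
      _ = (∑ j ∈ Finset.range (N+1), ‖(bc j)‖ * B j) * K
          * ‖z‖ ^ (-((N:ℝ)+3/2)) := by
          rw [← Finset.sum_mul]
          ring
  calc ‖T1‖ + ‖T2‖
      ≤ R * (m ^ (-((N:ℝ)+3/2))) * A * ‖z‖ ^ (-((N:ℝ)+3/2))
        + (∑ j ∈ Finset.range (N+1), ‖(bc j)‖ * B j) * K
          * ‖z‖ ^ (-((N:ℝ)+3/2)) := add_le_add hT1bound hT2bound
    _ ≤ (R * (m ^ (-((N:ℝ)+3/2))) * A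
        + (∑ j ∈ Finset.range (N+1), ‖(bc j)‖ * B j) * K + 1)
        * ‖z‖ ^ (-((N:ℝ)+3/2)) := by nlinarith [hXnn]

end
end

section
/- Fix L_C > 0. Let x₁ ∈ ℝ, x₂ ∈ [−L_C, L_C], and let y₂ ∈ ℂ satisfy either (Re y₂ > L_C and Im y₂ ≥ 0) or (Re y₂ < −L_C and Im y₂ ≤ 0). Then (y₂ − x₂)² has nonnegative imaginary part and does not lie in (−∞, 0]; moreover x₁² + (y₂ − x₂)² does not lie in (−∞, 0], and 0 ≤ Im √(x₁² + (y₂ − x₂)²) ≤ |Im y₂|, where √ is the principal square root. -/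
open MeasureTheory Set

noncomputable section

/-- For real `x₁`, `x₂ ∈ [-L,L]`, and `y₂` with `Re y₂ > L, Im y₂ ≥ 0`
or `Re y₂ < -L, Im y₂ ≤ 0`: `(y₂-x₂)²` has nonnegative imaginary part and avoids the cut
`(-∞,0]`, as does `x₁² + (y₂-x₂)²`, and `0 ≤ Im √(x₁²+(y₂-x₂)²) ≤ |Im y₂|`
(principal square root). -/
theorem statement_15 (L : ℝ) (hL : 0 < L) (x₁ x₂ : ℝ) (hx₂ : x₂ ∈ Set.Icc (-L) L)
    (y₂ : ℂ) (hy : (L < y₂.re ∧ 0 ≤ y₂.im) ∨ (y₂.re < -L ∧ y₂.im ≤ 0)) :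
    0 ≤ ((y₂ - (x₂ : ℂ)) ^ 2).im ∧
    (y₂ - (x₂ : ℂ)) ^ 2 ∉ {z : ℂ | z.im = 0 ∧ z.re ≤ 0} ∧
    ((x₁ : ℂ) ^ 2 + (y₂ - (x₂ : ℂ)) ^ 2) ∉ {z : ℂ | z.im = 0 ∧ z.re ≤ 0} ∧
    0 ≤ (((x₁ : ℂ) ^ 2 + (y₂ - (x₂ : ℂ)) ^ 2) ^ (1/2 : ℂ)).im ∧
    (((x₁ : ℂ) ^ 2 + (y₂ - (x₂ : ℂ)) ^ 2) ^ (1/2 : ℂ)).im ≤ |y₂.im| := by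
  obtain ⟨hx₂l, hx₂r⟩ := hx₂
  set a : ℝ := y₂.re - x₂ with ha_def
  set t : ℝ := y₂.im with ht_def
  have hat : 0 ≤ a * t := by
    rcases hy with ⟨h1, h2⟩ | ⟨h1, h2⟩
    · have : 0 < a := by simp only [ha_def]; linarith
      positivity
    · have ha : a < 0 := by simp only [ha_def]; linarith
      nlinarith
  have hane : a ≠ 0 := by
    rcases hy with ⟨h1, h2⟩ | ⟨h1, h2⟩
    · have : 0 < a := by simp only [ha_def]; linarith
      linarith
    · have : a < 0 := by simp only [ha_def]; linarith
      linarith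
  have hwre : (y₂ - (x₂ : ℂ)).re = a := by simp [ha_def]
  have hwim : (y₂ - (x₂ : ℂ)).im = t := by simp [ht_def]
  have him : ((y₂ - (x₂ : ℂ)) ^ 2).im = 2 * (a * t) := by
    rw [pow_two, Complex.mul_im, hwre, hwim]; ring
  have hre : ((y₂ - (x₂ : ℂ)) ^ 2).re = a ^ 2 - t ^ 2 := by
    rw [pow_two, Complex.mul_re, hwre, hwim]; ring
  set z : ℂ := (x₁ : ℂ) ^ 2 + (y₂ - (x₂ : ℂ)) ^ 2 with hz_def
  have hzim : z.im = 2 * (a * t) := by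
    rw [hz_def, Complex.add_im, him]
    simp [pow_two, Complex.mul_im]
  have hzre : z.re = x₁ ^ 2 + a ^ 2 - t ^ 2 := by
    rw [hz_def, Complex.add_re, hre]
    simp [pow_two, Complex.mul_re]; ring
  have hzim0 : 0 ≤ z.im := by rw [hzim]; linarith
  have habs : ‖z‖ ≤ z.re + 2 * t ^ 2 := by
    have h1 : ‖z‖ ^ 2 = z.re ^ 2 + z.im ^ 2 := by
      rw [Complex.sq_norm, Complex.normSq_apply]; ring
    have h2 : z.re ^ 2 + z.im ^ 2 ≤ (z.re + 2 * t ^ 2) ^ 2 := by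
      rw [hzim, hzre]; nlinarith [sq_nonneg x₁, sq_nonneg (a*t), sq_nonneg t, sq_nonneg a,
        sq_nonneg (x₁ * t)]
    have h3 : 0 ≤ z.re + 2 * t ^ 2 := by
      rw [hzre]; nlinarith [sq_nonneg x₁, sq_nonneg a, sq_nonneg t]
    nlinarith [norm_nonneg z]
  have h12 : (1/2 : ℂ) = (2⁻¹ : ℂ) := by norm_num
  have himsqrt : (z ^ (1/2 : ℂ)).im = Real.sqrt ((‖z‖ - z.re) / 2) := by
    rw [h12, Complex.cpow_inv_two_im_eq_sqrt hzim0]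
  refine ⟨by rw [him]; linarith, ?_, ?_, ?_, ?_⟩
  · rintro ⟨h1, h2⟩
    rw [him] at h1
    have ht0 : t = 0 := by
      rcases mul_eq_zero.1 (by linarith : a * t = 0) with h | h
      · exact absurd h hane
      · exact h
    rw [hre, ht0] at h2
    have : 0 < a ^ 2 := by positivity
    nlinarith
  · rintro ⟨h1, h2⟩
    rw [hzim] at h1
    have ht0 : t = 0 := by
      rcases mul_eq_zero.1 (by linarith : a * t = 0) with h | h
      · exact absurd h hane
      · exact h
    rw [hzre, ht0] at h2
    have : a ^ 2 > 0 := by positivity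
    nlinarith [sq_nonneg x₁]
  · rw [himsqrt]; exact Real.sqrt_nonneg _
  · rw [himsqrt]
    have : (‖z‖ - z.re) / 2 ≤ t ^ 2 := by linarith
    calc Real.sqrt ((‖z‖ - z.re) / 2) ≤ Real.sqrt (t ^ 2) :=
          Real.sqrt_le_sqrt this
      _ = |t| := Real.sqrt_sq_eq_abs t
end
end
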